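/- If 0 < α < 1 and λ ≠ 0, there is no μ ∈ ℂ such that E_α(λ t^α) = e^{μ t} for all t ≥ 0; consequently the fractional evolution t ↦ E_α(λ t^α) does not satisfy the semigroup law g(t+s) = g(t)g(s) unless λ = 0 or α = 1. -/

import Mathlib

/-- The (complex) Mittag–Leffler function `E_α(z)`. -/
noncomputable def mittagLeffler (α : ℝ) (z : ℂ) : ℂ :=
  ∑' k : ℕ, z ^ k / Complex.Gamma (α * k + 1)

open Filter Topology


lemma two_pow_le_two_mul_factorial : ∀ m : ℕ, 2 ^ m ≤ 2 * Nat.factorial m := by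
  intro m
  cases m with
  | zero => simp
  | succ n =>
    induction n with
    | zero => simp [Nat.factorial]
    | succ p ih =>
      rw [pow_succ, Nat.factorial_succ]
      have h2 : 2 ≤ p + 1 + 1 := by omega
      have hfpos : 1 ≤ Nat.factorial (p+1) := Nat.one_le_iff_ne_zero.mpr (Nat.factorial_ne_zero _)
      calc 2 ^ (p+1) * 2 ≤ 2 * Nat.factorial (p+1) * 2 := by omega
      _ ≤ 2 * ((p + 1 + 1) * Nat.factorial (p+1)) := by nlinarith

lemma gamma_inv_summable {α : ℝ} (hα : 0 < α) (β : ℝ) (hβ : 0 ≤ β) :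
    Summable (fun k : ℕ => (Real.Gamma (α * k + β + 1))⁻¹) := by
  rw [← summable_nat_add_iff (⌈1/α⌉₊ + 1)]
  have h2α : (1:ℝ) < 2 ^ α := by
    calc (1:ℝ) = 2 ^ (0:ℝ) := by simp
    _ < 2 ^ α := (Real.rpow_lt_rpow_left_iff (by norm_num)).mpr hα
  have hr0 : (0:ℝ) < ((2:ℝ) ^ α)⁻¹ := by positivity
  have hr1 : ((2:ℝ) ^ α)⁻¹ < 1 := by
    rw [inv_lt_one_iff₀]; right; exact h2α
  have hsum := (summable_geometric_of_lt_one hr0.le hr1).mul_left 4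
  apply Summable.of_nonneg_of_le (fun k => by positivity) _ hsum
  intro k
  set c : ℕ := ⌈1/α⌉₊ + 1 with hc
  set n : ℕ := k + c with hndef
  have hn1 : 1 ≤ α * n := by
    have h1 : (1/α) ≤ (⌈1/α⌉₊ : ℝ) := Nat.le_ceil _
    have hn : (⌈1/α⌉₊:ℝ) ≤ (n:ℝ) := by
      have : (⌈1/α⌉₊) ≤ n := by omega
      exact_mod_cast this
    calc (1:ℝ) = α * (1/α) := by field_simp
    _ ≤ α * n := by nlinarith
  set m : ℕ := ⌊α * n⌋₊ with hm
  have hm1 : 1 ≤ m := Nat.le_floor (by exact_mod_cast hn1)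
  have hmle : (m:ℝ) ≤ α * n := Nat.floor_le (by positivity)
  have hmlt : α * n - 1 < (m:ℝ) := by
    have := Nat.lt_floor_add_one (α * (n:ℝ))
    linarith
  have hgam : (Nat.factorial m : ℝ) ≤ Real.Gamma (α * n + β + 1) := by
    have h1 : ((m:ℝ) + 1) ≤ α * n + β + 1 := by linarith
    have h2 : (2:ℝ) ≤ (m:ℝ) + 1 := by
      have : (1:ℝ) ≤ (m:ℝ) := by exact_mod_cast hm1
      linarith
    have := Real.Gamma_strictMonoOn_Ici.monotoneOn h2 (le_trans h2 h1) h1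
    rw [Real.Gamma_nat_eq_factorial] at this
    exact_mod_cast this
  have hgpos : (0:ℝ) < Real.Gamma (α * n + β + 1) :=
    Real.Gamma_pos_of_pos (by positivity)
  have hfactpos : (0:ℝ) < (Nat.factorial m : ℝ) := by positivity
  have hpowpos : (0:ℝ) < (2:ℝ) ^ (m:ℕ) := by positivity
  have step1 : (Real.Gamma (α * n + β + 1))⁻¹ ≤ ((Nat.factorial m : ℝ))⁻¹ :=
    inv_anti₀ hfactpos hgam
  have step2 : ((Nat.factorial m : ℝ))⁻¹ ≤ 2 / (2:ℝ) ^ (m:ℕ) := by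
    rw [inv_eq_one_div, div_le_div_iff₀ hfactpos hpowpos, one_mul]
    have h := two_pow_le_two_mul_factorial m
    calc (2:ℝ) ^ (m:ℕ) = ((2 ^ m : ℕ) : ℝ) := by push_cast; ring
    _ ≤ ((2 * Nat.factorial m : ℕ) : ℝ) := by exact_mod_cast h
    _ = 2 * (Nat.factorial m : ℝ) := by push_cast; ring
  have step3 : 2 / (2:ℝ) ^ (m:ℕ) ≤ 2 / (2:ℝ) ^ (α * n - 1) := by
    apply div_le_div_of_nonneg_left (by norm_num) (by positivity)
    rw [← Real.rpow_natCast 2 m]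
    exact (Real.rpow_le_rpow_left_iff (by norm_num)).mpr hmlt.le
  have step4 : 2 / (2:ℝ) ^ (α * n - 1) = 4 * (((2:ℝ) ^ α)⁻¹) ^ (n:ℕ) := by
    rw [Real.rpow_sub (by norm_num), Real.rpow_one]
    rw [show α * (n:ℝ) = α * ((n:ℕ):ℝ) by norm_cast]
    rw [show (2:ℝ) ^ (α * ((n:ℕ):ℝ)) = ((2:ℝ) ^ α) ^ (n:ℕ) by
      rw [← Real.rpow_natCast ((2:ℝ)^α) n, ← Real.rpow_mul (by norm_num)]]
    rw [inv_pow]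
    have : ((2:ℝ) ^ α) ^ (n:ℕ) ≠ 0 := by positivity
    field_simp
    ring
  have step5 : 4 * (((2:ℝ) ^ α)⁻¹) ^ (n:ℕ) ≤ 4 * (((2:ℝ) ^ α)⁻¹) ^ k := by
    have := pow_le_pow_of_le_one hr0.le hr1.le (show k ≤ n by omega)
    linarith
  calc (Real.Gamma (α * ↑(k + c) + β + 1))⁻¹
      = (Real.Gamma (α * n + β + 1))⁻¹ := by rw [hndef]
    _ ≤ ((Nat.factorial m : ℝ))⁻¹ := step1
    _ ≤ 2 / (2:ℝ) ^ (m:ℕ) := step2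
    _ ≤ 2 / (2:ℝ) ^ (α * n - 1) := step3
    _ = 4 * (((2:ℝ) ^ α)⁻¹) ^ (n:ℕ) := step4
    _ ≤ 4 * (((2:ℝ) ^ α)⁻¹) ^ k := step5


noncomputable def mlShift (α : ℝ) (j : ℕ) (z : ℂ) : ℂ :=
  ∑' k : ℕ, z ^ k / Complex.Gamma (α * (k + j) + 1)

lemma gamma_cast (α : ℝ) (k j : ℕ) :
    Complex.Gamma ((α : ℂ) * ((k : ℂ) + (j : ℂ)) + 1) =
      ((Real.Gamma (α * (k + j) + 1) : ℝ) : ℂ) := by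
  rw [← Complex.Gamma_ofReal]
  push_cast
  ring_nf

lemma norm_ml_term (α : ℝ) (hα : 0 < α) (k j : ℕ) (z : ℂ) :
    ‖z ^ k / Complex.Gamma ((α : ℂ) * ((k : ℂ) + (j : ℂ)) + 1)‖ =
      ‖z‖ ^ k * (Real.Gamma (α * (k + j) + 1))⁻¹ := by
  rw [gamma_cast, norm_div, norm_pow, Complex.norm_real, div_eq_mul_inv,
    Real.norm_eq_abs, abs_of_pos (Real.Gamma_pos_of_pos (by positivity))]

lemma ml_summable_gamma {α : ℝ} (hα : 0 < α) (j : ℕ) :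
    Summable (fun k : ℕ => (Real.Gamma (α * (k + j) + 1))⁻¹) := by
  have := gamma_inv_summable hα (α * j) (by positivity)
  apply this.congr
  intro k
  congr 1
  push_cast
  ring_nf

lemma ml_summable {α : ℝ} (hα : 0 < α) (j : ℕ) {z : ℂ} (hz : ‖z‖ ≤ 1) :
    Summable (fun k : ℕ => z ^ k / Complex.Gamma ((α : ℂ) * ((k : ℂ) + (j : ℂ)) + 1)) := by
  apply Summable.of_norm_bounded (ml_summable_gamma hα j)
  intro k
  rw [norm_ml_term α hα k j z]
  have h1 : ‖z‖ ^ k ≤ 1 := pow_le_one₀ (norm_nonneg z) hz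
  have h2 : (0:ℝ) ≤ (Real.Gamma (α * (k + j) + 1))⁻¹ := by
    have := Real.Gamma_pos_of_pos (show (0:ℝ) < α * (k + j) + 1 by positivity)
    positivity
  nlinarith

lemma mlShift_norm_le {α : ℝ} (hα : 0 < α) (j : ℕ) {z : ℂ} (hz : ‖z‖ ≤ 1) :
    ‖mlShift α j z‖ ≤ ∑' k : ℕ, (Real.Gamma (α * (k + j) + 1))⁻¹ := by
  refine (norm_tsum_le_tsum_norm ?_).trans (Summable.tsum_le_tsum ?_ ?_ (ml_summable_gamma hα j))
  · exact (ml_summable hα j hz).norm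
  · intro k
    rw [norm_ml_term α hα k j z]
    have h1 : ‖z‖ ^ k ≤ 1 := pow_le_one₀ (norm_nonneg z) hz
    have h2 : (0:ℝ) ≤ (Real.Gamma (α * (k + j) + 1))⁻¹ := by
      have := Real.Gamma_pos_of_pos (show (0:ℝ) < α * (k + j) + 1 by positivity)
      positivity
    nlinarith
  · exact (ml_summable hα j hz).norm

lemma mlShift_rec {α : ℝ} (hα : 0 < α) (j : ℕ) {z : ℂ} (hz : ‖z‖ ≤ 1) :
    mlShift α j z = 1 / Complex.Gamma ((α : ℂ) * (j : ℂ) + 1) + z * mlShift α (j+1) z := by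
  unfold mlShift
  rw [Summable.tsum_eq_zero_add (ml_summable hα j hz)]
  congr 1
  · norm_num
  · rw [← tsum_mul_left]
    congr 1 with k
    have harg : ((k:ℂ) + 1 + (j:ℂ)) = ((k:ℂ) + ((j:ℕ)+1 : ℕ)) := by push_cast; ring
    rw [pow_succ]
    push_cast
    ring_nf


lemma ml_eq_shift0 {α : ℝ} (z : ℂ) : mittagLeffler α z = mlShift α 0 z := by
  unfold mittagLeffler mlShift
  congr 1 with k
  norm_num

lemma ml_key {α : ℝ} (hα : 0 < α) {z : ℂ} (hz : ‖z‖ ≤ 1) :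
    mittagLeffler α z = 1 + z / Complex.Gamma ((α:ℂ) + 1) + z^2 * mlShift α 2 z := by
  rw [ml_eq_shift0, mlShift_rec hα 0 hz, mlShift_rec hα 1 hz]
  norm_num [Complex.Gamma_one]
  ring

lemma tendsto_rpow_zero {γ : ℝ} (hγ : 0 < γ) :
    Filter.Tendsto (fun t : ℝ => t ^ γ) (nhdsWithin 0 (Set.Ioi 0)) (nhds 0) := by
  have hc : ContinuousAt (fun x : ℝ => x ^ γ) 0 :=
    Real.continuousAt_rpow_const 0 γ (Or.inr hγ.le)
  have := hc.tendsto
  rw [Real.zero_rpow hγ.ne'] at this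
  exact this.mono_left nhdsWithin_le_nhds

lemma gamma_a1_ne {α : ℝ} (hα : 0 < α) : Complex.Gamma ((α:ℂ) + 1) ≠ 0 := by
  rw [show ((α:ℂ)+1) = ((α+1 : ℝ):ℂ) by push_cast; ring, Complex.Gamma_ofReal]
  exact_mod_cast (Real.Gamma_pos_of_pos (by linarith)).ne'

lemma ml_tendsto {α : ℝ} (hα : 0 < α) (lam : ℂ) :
    Filter.Tendsto
      (fun t : ℝ => (mittagLeffler α (lam * ((t ^ α : ℝ) : ℂ)) - 1) / ((t ^ α : ℝ) : ℂ))
      (nhdsWithin 0 (Set.Ioi 0)) (nhds (lam / Complex.Gamma ((α:ℂ) + 1))) := by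
  set L := lam / Complex.Gamma ((α:ℂ) + 1) with hL
  set C : ℝ := ∑' k : ℕ, (Real.Gamma (α * (k + 2) + 1))⁻¹ with hC
  have hΓ : Complex.Gamma ((α:ℂ) + 1) ≠ 0 := gamma_a1_ne hα
  rw [← tendsto_sub_nhds_zero_iff]
  have hsmall : ∀ᶠ t in nhdsWithin (0:ℝ) (Set.Ioi 0), ‖lam * ((t^α : ℝ):ℂ)‖ ≤ 1 := by
    have h1 : Filter.Tendsto (fun t : ℝ => ‖lam‖ * t ^ α)
        (nhdsWithin 0 (Set.Ioi 0)) (nhds 0) := by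
      simpa using (tendsto_rpow_zero hα).const_mul ‖lam‖
    filter_upwards [h1.eventually_lt_const (show (0:ℝ) < 1 by norm_num),
      self_mem_nhdsWithin] with t h1t ht
    have ht0 : (0:ℝ) < t := ht
    have htα : (0:ℝ) ≤ t ^ α := (Real.rpow_pos_of_pos ht0 α).le
    rw [norm_mul, Complex.norm_real, Real.norm_eq_abs, abs_of_nonneg htα]
    exact h1t.le
  have hbound : ∀ᶠ t in nhdsWithin (0:ℝ) (Set.Ioi 0),
      ‖(mittagLeffler α (lam * ((t^α:ℝ):ℂ)) - 1) / ((t^α:ℝ):ℂ) - L‖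
        ≤ (‖lam‖^2 * C) * t^α := by
    filter_upwards [hsmall, self_mem_nhdsWithin] with t hz ht
    have ht0 : (0:ℝ) < t := ht
    have htα : (0:ℝ) < t ^ α := Real.rpow_pos_of_pos ht0 α
    have htαC : ((t^α : ℝ):ℂ) ≠ 0 := by exact_mod_cast htα.ne'
    have hml := ml_key hα hz
    have heq : (mittagLeffler α (lam * ((t^α:ℝ):ℂ)) - 1) / ((t^α:ℝ):ℂ) - L
        = lam^2 * ((t^α:ℝ):ℂ) * mlShift α 2 (lam * ((t^α:ℝ):ℂ)) := by
      rw [hml, hL]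
      field_simp
      ring
    rw [heq, norm_mul, norm_mul, norm_pow, Complex.norm_real, Real.norm_eq_abs,
      abs_of_pos htα]
    have hms := mlShift_norm_le hα 2 hz
    have h1 : (0:ℝ) ≤ ‖lam‖^2 * t^α := by positivity
    calc ‖lam‖^2 * t^α * ‖mlShift α 2 (lam * ((t^α:ℝ):ℂ))‖
        ≤ ‖lam‖^2 * t^α * C := by
          exact mul_le_mul_of_nonneg_left hms h1
      _ = ‖lam‖^2 * C * t^α := by ring
  refine squeeze_zero_norm' hbound ?_
  simpa using (tendsto_rpow_zero hα).const_mul (‖lam‖^2 * C)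


lemma tendsto_cast_rpow {α : ℝ} (hα : 0 < α) :
    Filter.Tendsto (fun t : ℝ => ((t ^ α : ℝ) : ℂ)) (nhdsWithin 0 (Set.Ioi 0)) (nhds 0) := by
  have := (Complex.continuous_ofReal.tendsto 0).comp (tendsto_rpow_zero hα)
  simpa [Function.comp_def] using this

lemma ml_tendsto_one {α : ℝ} (hα : 0 < α) (lam : ℂ) :
    Filter.Tendsto (fun t : ℝ => mittagLeffler α (lam * ((t ^ α : ℝ) : ℂ)))
      (nhdsWithin 0 (Set.Ioi 0)) (nhds 1) := by
  have h := (ml_tendsto hα lam).mul (tendsto_cast_rpow hα)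
  rw [mul_zero] at h
  have heq : ∀ᶠ t in nhdsWithin (0:ℝ) (Set.Ioi 0),
      (mittagLeffler α (lam * ((t^α:ℝ):ℂ)) - 1) / ((t^α:ℝ):ℂ) * ((t^α:ℝ):ℂ)
        = mittagLeffler α (lam * ((t^α:ℝ):ℂ)) - 1 := by
    filter_upwards [self_mem_nhdsWithin] with t ht
    have htα : (0:ℝ) < t ^ α := Real.rpow_pos_of_pos ht α
    have htαC : ((t^α : ℝ):ℂ) ≠ 0 := by exact_mod_cast htα.ne'
    exact div_mul_cancel₀ _ htαC
  have h2 := h.congr' heq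
  have h3 := h2.add_const 1
  simpa using h3

lemma exp_slope_tendsto (μ : ℂ) {α : ℝ} (hα : 0 < α) (hα1 : α < 1) :
    Filter.Tendsto (fun t : ℝ => (Complex.exp (μ * t) - 1) / ((t ^ α : ℝ) : ℂ))
      (nhdsWithin 0 (Set.Ioi 0)) (nhds 0) := by
  have hd : HasDerivAt (fun t : ℝ => Complex.exp (μ * t)) μ 0 := by
    have h1 : HasDerivAt (fun t : ℝ => ((t:ℂ))) 1 0 := by
      exact Complex.ofRealCLM.hasDerivAt (x := (0:ℝ))
    have h2 := (h1.const_mul μ).cexp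
    simpa using h2
  have hslope := hasDerivAt_iff_tendsto_slope.mp hd
  have hslope' : Filter.Tendsto (slope (fun t : ℝ => Complex.exp (μ * t)) 0)
      (nhdsWithin 0 (Set.Ioi 0)) (nhds μ) :=
    hslope.mono_left (nhdsWithin_mono 0 (fun x hx => ne_of_gt hx))
  have hpow : Filter.Tendsto (fun t : ℝ => ((t ^ (1-α) : ℝ) : ℂ))
      (nhdsWithin 0 (Set.Ioi 0)) (nhds 0) := by
    have := (Complex.continuous_ofReal.tendsto 0).comp (tendsto_rpow_zero (by linarith : 0 < 1 - α))
    simpa [Function.comp_def] using this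
  have h := hslope'.mul hpow
  rw [mul_zero] at h
  apply h.congr'
  filter_upwards [self_mem_nhdsWithin] with t ht
  have ht0 : (0:ℝ) < t := ht
  have key : t ^ (1-α) * t⁻¹ = (t ^ α)⁻¹ := by
    rw [← Real.rpow_neg_one t, ← Real.rpow_add ht0, ← Real.rpow_neg ht0.le]
    congr 1
    ring
  have hslope_eq : slope (fun t : ℝ => Complex.exp (μ * t)) 0 t
      = ((t:ℂ))⁻¹ * (Complex.exp (μ * t) - 1) := by
    simp [slope, Complex.real_smul, Complex.ofReal_inv]
  have hcast : (((t ^ α : ℝ):ℂ))⁻¹ = ((t ^ (1-α) : ℝ) : ℂ) * ((t:ℂ))⁻¹ := by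
    rw [← Complex.ofReal_inv, ← Complex.ofReal_inv, ← Complex.ofReal_mul, key]
  rw [hslope_eq, div_eq_mul_inv, hcast]
  ring


/-- For `0 < α < 1` and `λ ≠ 0`, there is no `μ ∈ ℂ` such that `E_α(λ t^α) = e^{μ t}`
for all `t ≥ 0`; consequently the fractional evolution `t ↦ E_α(λ t^α)` does not
satisfy the semigroup law `g(t+s) = g(t) g(s)` on `t, s ≥ 0`. -/
theorem mittagLeffler_not_semigroup (α : ℝ) (hα : 0 < α) (hα1 : α < 1)
    (lam : ℂ) (hlam : lam ≠ 0) :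
    (¬ ∃ μ : ℂ, ∀ t : ℝ, 0 ≤ t →
        mittagLeffler α (lam * ((t ^ α : ℝ) : ℂ)) = Complex.exp (μ * t)) ∧
    ¬ (∀ t s : ℝ, 0 ≤ t → 0 ≤ s →
        mittagLeffler α (lam * (((t + s) ^ α : ℝ) : ℂ)) =
          mittagLeffler α (lam * ((t ^ α : ℝ) : ℂ)) *
            mittagLeffler α (lam * ((s ^ α : ℝ) : ℂ))) := by
  have hΓ : Complex.Gamma ((α:ℂ) + 1) ≠ 0 := gamma_a1_ne hα
  set L := lam / Complex.Gamma ((α:ℂ) + 1) with hL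
  have hLne : L ≠ 0 := div_ne_zero hlam hΓ
  have hKey := ml_tendsto hα lam
  constructor
  · rintro ⟨μ, hμ⟩
    have h1 : Filter.Tendsto (fun t : ℝ => (Complex.exp (μ * t) - 1) / ((t^α:ℝ):ℂ))
        (nhdsWithin 0 (Set.Ioi 0)) (nhds L) := by
      apply hKey.congr'
      filter_upwards [self_mem_nhdsWithin] with t ht
      rw [hμ t (le_of_lt ht)]
    exact hLne (tendsto_nhds_unique h1 (exp_slope_tendsto μ hα hα1))
  · intro H
    have h2t : Filter.Tendsto (fun t : ℝ => 2*t)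
        (nhdsWithin (0:ℝ) (Set.Ioi 0)) (nhdsWithin (0:ℝ) (Set.Ioi 0)) := by
      rw [tendsto_nhdsWithin_iff]
      constructor
      · have h0 : Filter.Tendsto (fun t:ℝ => 2*t) (nhds 0) (nhds 0) := by
          have hc : Continuous (fun t:ℝ => 2*t) := by continuity
          simpa using hc.tendsto (0:ℝ)
        exact h0.mono_left nhdsWithin_le_nhds
      · filter_upwards [self_mem_nhdsWithin] with t ht
        exact mul_pos two_pos (show (0:ℝ) < t from ht)
    have hA0 := hKey.comp h2t
    have hA := hA0.mul_const (((2:ℝ)^α : ℝ) : ℂ)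
    have h2αC : (((2:ℝ)^α : ℝ) : ℂ) ≠ 0 := by
      have : (0:ℝ) < (2:ℝ)^α := Real.rpow_pos_of_pos (by norm_num) α
      exact_mod_cast this.ne'
    have hA' : Filter.Tendsto
        (fun t : ℝ => (mittagLeffler α (lam * (((2*t) ^ α : ℝ) : ℂ)) - 1) / ((t^α:ℝ):ℂ))
        (nhdsWithin (0:ℝ) (Set.Ioi 0)) (nhds (L * (((2:ℝ)^α : ℝ) : ℂ))) := by
      apply hA.congr'
      filter_upwards [self_mem_nhdsWithin] with t ht
      have ht0 : (0:ℝ) < t := ht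
      have htαC : ((t^α : ℝ):ℂ) ≠ 0 := by
        exact_mod_cast (Real.rpow_pos_of_pos ht0 α).ne'
      have hmul : ((2*t)^α : ℝ) = (2:ℝ)^α * t^α := Real.mul_rpow (by norm_num) ht0.le
      show _ = _
      simp only [Function.comp]
      rw [hmul, Complex.ofReal_mul]
      field_simp
    have hFone := ml_tendsto_one hα lam
    have hB := hKey.mul (hFone.add_const 1)
    have hB' : Filter.Tendsto
        (fun t : ℝ => (mittagLeffler α (lam * ((t ^ α : ℝ) : ℂ)) *
            mittagLeffler α (lam * ((t ^ α : ℝ) : ℂ)) - 1) / ((t^α:ℝ):ℂ))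
        (nhdsWithin (0:ℝ) (Set.Ioi 0)) (nhds (L * 2)) := by
      have : L * (1 + 1) = L * 2 := by ring
      rw [← this]
      apply hB.congr'
      filter_upwards [self_mem_nhdsWithin] with t ht
      ring
    have hEq : ∀ᶠ t in nhdsWithin (0:ℝ) (Set.Ioi 0),
        (mittagLeffler α (lam * (((2*t) ^ α : ℝ) : ℂ)) - 1) / ((t^α:ℝ):ℂ)
          = (mittagLeffler α (lam * ((t ^ α : ℝ) : ℂ)) *
              mittagLeffler α (lam * ((t ^ α : ℝ) : ℂ)) - 1) / ((t^α:ℝ):ℂ) := by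
      filter_upwards [self_mem_nhdsWithin] with t ht
      have h := H t t (le_of_lt ht) (le_of_lt ht)
      rw [show t + t = 2*t by ring] at h
      rw [h]
    have huniq := tendsto_nhds_unique (hA'.congr' hEq) hB'
    have h2 : (((2:ℝ)^α : ℝ) : ℂ) = (2:ℂ) := mul_left_cancel₀ hLne huniq
    have h2' : (2:ℝ)^α = 2 := by exact_mod_cast h2
    have hlt : (2:ℝ)^α < 2 := by
      calc (2:ℝ)^α < 2^(1:ℝ) := (Real.rpow_lt_rpow_left_iff one_lt_two).mpr hα1
      _ = 2 := Real.rpow_one 2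
    linarith
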